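/- (Lemma of §2.3: factorization of the cyclic Jacobi matrix.) With the notation of the context, X = g · J_0(x_0) · d_n(vz) · g^{−1} · J_{n−1}(x_{n−1}) · J_{n−2}(x_{n−2}) ⋯ J_2(x_2) · J_1(x_1) as an identity of n×n matrices over R. -/

import Mathlib

/-!
Lemma of §2.3: factorization of the cyclic Jacobi matrix
`X = g · J_0(x_0) · d_n(vz) · g⁻¹ · J_{n−1}(x_{n−1}) ⋯ J_1(x_1)`.
Matrices are indexed by `Fin n` (0-based), so the paper's `E_{i,j}`
(rows/columns 1,…,n) is `single (i−1) (j−1) 1`.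
-/

noncomputable section
open Matrix
open Fin.NatCast

/-- ascending product `F 0 * F 1 * ⋯ * F (k−1)`. -/
def prodAsc {M : Type*} [Monoid M] (F : ℕ → M) : ℕ → M
  | 0 => 1
  | k + 1 => prodAsc F k * F k

/-- descending product `F (k−1) * ⋯ * F 1 * F 0`. -/
def prodDesc {M : Type*} [Monoid M] (F : ℕ → M) : ℕ → M
  | 0 => 1
  | k + 1 => F k * prodDesc F k

variable {R : Type*} [CommRing R]

/-- `J_k(c) := 1 + c·E_{k,k+1}` for `1 ≤ k ≤ n−1`. -/
def Jmat (n : ℕ) [NeZero n] (k : ℕ) (c : R) : Matrix (Fin n) (Fin n) R :=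
  1 + c • single (((k - 1 : ℕ)) : Fin n) ((k : ℕ) : Fin n) (1 : R)

/-- `J_0(c) := 1 + c·z·E_{n,1}`. -/
def J0mat (n : ℕ) [NeZero n] (z c : R) : Matrix (Fin n) (Fin n) R :=
  1 + (c * z) • single (((n - 1 : ℕ)) : Fin n) ((0 : ℕ) : Fin n) (1 : R)

/-- `d_n(c) := 1 + c·E_{n,n}`. -/
def dnmat (n : ℕ) [NeZero n] (c : R) : Matrix (Fin n) (Fin n) R :=
  1 + c • single (((n - 1 : ℕ)) : Fin n) (((n - 1 : ℕ)) : Fin n) (1 : R)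

/-- the cyclic Jacobi matrix `X = 1 + ∑_{i=1}^{n−1} x_i E_{i,i+1} + x_0 z E_{n,1}`. -/
def Xmat (n : ℕ) [NeZero n] (x : Fin n → R) (z : R) : Matrix (Fin n) (Fin n) R :=
  1 + (∑ i ∈ Finset.range (n - 1),
        x ((i + 1 : ℕ) : Fin n) • single ((i : ℕ) : Fin n) ((i + 1 : ℕ) : Fin n) (1 : R))
    + (x 0 * z) • single (((n - 1 : ℕ)) : Fin n) ((0 : ℕ) : Fin n) (1 : R)

section Aux

/-- matrix unit with natural-number indices (taken mod `n`). -/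
def Ee (R : Type*) [CommRing R] (n : ℕ) [NeZero n] (i j : ℕ) :
    Matrix (Fin n) (Fin n) R :=
  single (i : Fin n) (j : Fin n) (1 : R)

variable {n : ℕ} [NeZero n]

lemma finCast_ne {i j : ℕ} (hi : i < n) (hj : j < n) (h : i ≠ j) :
    (i : Fin n) ≠ (j : Fin n) := by
  intro he
  apply h
  have h2 := congrArg Fin.val he
  rwa [Fin.val_cast_of_lt hi, Fin.val_cast_of_lt hj] at h2

lemma Ee_mul_same (i j l : ℕ) : (Ee R n i j) * (Ee R n j l) = Ee R n i l := by
  simp [Ee]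

lemma Ee_mul_ne (i l : ℕ) {j k : ℕ} (hj : j < n) (hk : k < n) (h : j ≠ k) :
    (Ee R n i j) * (Ee R n k l) = 0 := by
  rw [Ee, Ee]
  exact Matrix.single_mul_single_of_ne (h := finCast_ne hj hk h) ..

lemma Jmat_succ (k : ℕ) (c : R) :
    Jmat n (k + 1) c = 1 + c • Ee R n k (k + 1) := by
  simp [Jmat, Ee]

/-- closed form of the descending product of the `J_i`. -/
lemma prodDesc_J (c : ℕ → R) :
    ∀ m : ℕ, m + 1 ≤ n →
      prodDesc (fun j => Jmat n (j + 1) (c j)) m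
        = 1 + ∑ j ∈ Finset.range m, c j • Ee R n j (j + 1)
  | 0, _ => by simp [prodDesc]
  | m + 1, hm => by
    have ih := prodDesc_J c m (by omega)
    have hz : (Ee R n m (m + 1)) * (∑ j ∈ Finset.range m, c j • Ee R n j (j + 1)) = 0 := by
      rw [Finset.mul_sum]
      refine Finset.sum_eq_zero fun j hj => ?_
      have hj' := Finset.mem_range.mp hj
      rw [mul_smul_comm, Ee_mul_ne _ _ (by omega) (by omega) (by omega), smul_zero]
    rw [prodDesc, ih, Jmat_succ, add_mul, one_mul, mul_add, mul_one, smul_mul_assoc, hz,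
      smul_zero, add_zero, Finset.sum_range_succ]
    abel

lemma Jmat_mul_neg (k : ℕ) (c : R) (hk : k + 2 ≤ n) :
    Jmat n (k + 1) c * Jmat n (k + 1) (-c) = 1 := by
  rw [Jmat_succ, Jmat_succ, mul_add, mul_one, add_mul, one_mul, smul_mul_assoc, mul_smul_comm,
    Ee_mul_ne _ _ (by omega) (by omega) (by omega), smul_zero, smul_zero, add_zero,
    add_assoc, ← add_smul]
  simp

lemma prodDesc_mul_prodAsc {M : Type*} [Monoid M] (F G : ℕ → M) :
    ∀ m : ℕ, (∀ j < m, F j * G j = 1) → prodDesc F m * prodAsc G m = 1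
  | 0, _ => by simp [prodDesc, prodAsc]
  | m + 1, h => by
    have ih := prodDesc_mul_prodAsc F G m (fun j hj => h j (by omega))
    rw [prodDesc, prodAsc, mul_assoc, ← mul_assoc (prodDesc F m), ih, one_mul]
    exact h m (by omega)

/-- the alternating partial products `(-1)^j c_0 ⋯ c_{j-1}`. -/
def dd (c : ℕ → R) (j : ℕ) : R := (-1 : R) ^ j * ∏ t ∈ Finset.range j, c t

lemma dd_zero (c : ℕ → R) : dd c 0 = 1 := by simp [dd]

lemma dd_succ (c : ℕ → R) (k : ℕ) : dd c (k + 1) = -(c k * dd c k) := by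
  rw [dd, dd, Finset.prod_range_succ, pow_succ]; ring

/-- row `n-1` of `g⁻¹`, starting from the matrix unit `E_{n-1,0}`. -/
lemma Ee_row0_mul_prodAsc (c : ℕ → R) :
    ∀ m : ℕ, m + 1 ≤ n →
      Ee R n (n - 1) 0 * prodAsc (fun j => Jmat n (j + 1) (-(c j))) m
        = ∑ j ∈ Finset.range (m + 1), dd c j • Ee R n (n - 1) j
  | 0, _ => by simp [prodAsc, dd_zero]
  | m + 1, hm => by
    have ih := Ee_row0_mul_prodAsc c m (by omega)
    rw [prodAsc, ← mul_assoc, ih, Jmat_succ, mul_add, mul_one, Finset.sum_mul]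
    have key : ∑ j ∈ Finset.range (m + 1),
        ((dd c j • Ee R n (n - 1) j) * ((-(c m)) • Ee R n m (m + 1)))
        = dd c (m + 1) • Ee R n (n - 1) (m + 1) := by
      rw [Finset.sum_eq_single m]
      · rw [smul_mul_assoc, mul_smul_comm, Ee_mul_same, smul_smul, dd_succ]
        congr 1
        ring
      · intro j hj hjm
        have hj' := Finset.mem_range.mp hj
        rw [smul_mul_assoc, mul_smul_comm, Ee_mul_ne _ _ (by omega) (by omega) hjm,
          smul_zero, smul_zero]
      · intro hm'
        exact absurd (Finset.self_mem_range_succ m) hm'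
    rw [key, Finset.sum_range_succ _ (m + 1)]

lemma Ee_last_mul_prodAsc (c : ℕ → R) :
    ∀ m : ℕ, m + 1 ≤ n - 1 →
      Ee R n (n - 1) (n - 1) * prodAsc (fun j => Jmat n (j + 1) (-(c j))) m
        = Ee R n (n - 1) (n - 1)
  | 0, _ => by simp [prodAsc]
  | m + 1, hm => by
    have ih := Ee_last_mul_prodAsc c m (by omega)
    rw [prodAsc, ← mul_assoc, ih, Jmat_succ, mul_add, mul_one, mul_smul_comm,
      Ee_mul_ne _ _ (by omega) (by omega) (by omega), smul_zero, add_zero]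

lemma rowsum_mul_Ee (r : ℕ) (f : ℕ → R) {m k : ℕ} (l : ℕ) (hm : m ≤ n) (hk : k < m) :
    (∑ j ∈ Finset.range m, f j • Ee R n r j) * Ee R n k l = f k • Ee R n r l := by
  rw [Finset.sum_mul, Finset.sum_eq_single k]
  · rw [smul_mul_assoc, Ee_mul_same]
  · intro j hj hjk
    have hj' := Finset.mem_range.mp hj
    rw [smul_mul_assoc, Ee_mul_ne _ _ (by omega) (by omega) hjk, smul_zero]
  · intro hk'
    exact absurd (Finset.mem_range.mpr hk) hk'

lemma rowsum_mul_Ee_zero (r : ℕ) (f : ℕ → R) {m k : ℕ} (l : ℕ) (hm : m ≤ n) (hk : k < n)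
    (hkm : m ≤ k) :
    (∑ j ∈ Finset.range m, f j • Ee R n r j) * Ee R n k l = 0 := by
  rw [Finset.sum_mul]
  refine Finset.sum_eq_zero fun j hj => ?_
  have hj' := Finset.mem_range.mp hj
  rw [smul_mul_assoc, Ee_mul_ne _ _ (by omega) hk (by omega), smul_zero]

/-- the telescoping identity for row `n-1`. -/
lemma telescope (c : ℕ → R) (m : ℕ) :
    (∑ j ∈ Finset.range (m + 1), dd c j • Ee R n (n - 1) j)
      + ∑ k ∈ Finset.range m, (c k * dd c k) • Ee R n (n - 1) (k + 1)
    = Ee R n (n - 1) 0 := by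
  rw [Finset.sum_range_succ', add_right_comm, ← Finset.sum_add_distrib]
  have hz : ∀ j ∈ Finset.range m,
      (dd c (j + 1) • Ee R n (n - 1) (j + 1) + (c j * dd c j) • Ee R n (n - 1) (j + 1))
        = 0 := by
    intro j _
    have h0 : dd c (j + 1) + c j * dd c j = 0 := by rw [dd_succ]; ring
    rw [← add_smul, h0, zero_smul]
  rw [Finset.sum_congr rfl hz, Finset.sum_const_zero, zero_add, dd_zero, one_smul]

end Aux

/-- **Lemma (§2.3)**:
`X = g · J_0(x_0) · d_n(vz) · g⁻¹ · J_{n−1}(x_{n−1}) ⋯ J_2(x_2) · J_1(x_1)`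
where `g = J_{n−2}(x_{n−2})⋯J_1(x_1)`, `g⁻¹ = J_1(−x_1)⋯J_{n−2}(−x_{n−2})`
and `v = (−1)^{n−1} x_0 x_1 ⋯ x_{n−1}`. -/
theorem cyclic_matrix_factorization (n : ℕ) [NeZero n] (hn : 2 ≤ n)
    (x : Fin n → R) (z : R) :
    Xmat n x z
      = (prodDesc (fun j => Jmat n (j + 1) (x ((j + 1 : ℕ) : Fin n))) (n - 2))
        * J0mat n z (x 0)
        * dnmat n ((((-1 : R) ^ (n - 1)) * ∏ i : Fin n, x i) * z)
        * (prodAsc (fun j => Jmat n (j + 1) (-(x ((j + 1 : ℕ) : Fin n)))) (n - 2))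
        * (prodDesc (fun j => Jmat n (j + 1) (x ((j + 1 : ℕ) : Fin n))) (n - 1)) := by
  classical
  set c : ℕ → R := fun j => x ((j + 1 : ℕ) : Fin n) with hc
  set v : R := (-1 : R) ^ (n - 1) * ∏ i : Fin n, x i with hv
  show Xmat n x z
      = prodDesc (fun j => Jmat n (j + 1) (c j)) (n - 2)
        * J0mat n z (x 0)
        * dnmat n (v * z)
        * prodAsc (fun j => Jmat n (j + 1) (-(c j))) (n - 2)
        * prodDesc (fun j => Jmat n (j + 1) (c j)) (n - 1)
  -- closed form of `g`
  have hA : prodDesc (fun j => Jmat n (j + 1) (c j)) (n - 2)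
      = 1 + ∑ j ∈ Finset.range (n - 2), c j • Ee R n j (j + 1) :=
    prodDesc_J c (n - 2) (by omega)
  -- `g * g⁻¹ = 1`
  have hAinv : prodDesc (fun j => Jmat n (j + 1) (c j)) (n - 2)
      * prodAsc (fun j => Jmat n (j + 1) (-(c j))) (n - 2) = 1 :=
    prodDesc_mul_prodAsc _ _ (n - 2) (fun j hj => Jmat_mul_neg j (c j) (by omega))
  -- splitting off the last factor of the long descending product
  have hsplit : prodDesc (fun j => Jmat n (j + 1) (c j)) (n - 1)
      = (1 + c (n - 2) • Ee R n (n - 2) (n - 1))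
        * prodDesc (fun j => Jmat n (j + 1) (c j)) (n - 2) := by
    rw [show (n : ℕ) - 1 = n - 2 + 1 from by omega]
    simp only [prodDesc]
    rw [Jmat_succ]
  -- rows `n-1` of `g⁻¹`
  have hrow0 : Ee R n (n - 1) 0 * prodAsc (fun j => Jmat n (j + 1) (-(c j))) (n - 2)
      = ∑ j ∈ Finset.range (n - 1), dd c j • Ee R n (n - 1) j := by
    have h := Ee_row0_mul_prodAsc (n := n) c (n - 2) (by omega)
    rwa [show (n : ℕ) - 2 + 1 = n - 1 from by omega] at h
  have hrowlast : Ee R n (n - 1) (n - 1) * prodAsc (fun j => Jmat n (j + 1) (-(c j))) (n - 2)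
      = Ee R n (n - 1) (n - 1) :=
    Ee_last_mul_prodAsc c (n - 2) (by omega)
  -- `g` fixes matrix units supported in row `n-1`
  have hArow : ∀ k : ℕ, prodDesc (fun j => Jmat n (j + 1) (c j)) (n - 2) * Ee R n (n - 1) k
      = Ee R n (n - 1) k := by
    intro k
    rw [hA, add_mul, one_mul, Finset.sum_mul]
    rw [Finset.sum_eq_zero fun j hj => ?_, add_zero]
    have hj' := Finset.mem_range.mp hj
    rw [smul_mul_assoc, Ee_mul_ne _ _ (by omega) (by omega) (by omega), smul_zero]
  -- the product of the two middle factors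
  have hBC : J0mat n z (x 0) * dnmat n (v * z)
      = 1 + ((x 0 * z) • Ee R n (n - 1) 0 + (v * z) • Ee R n (n - 1) (n - 1)) := by
    rw [J0mat, dnmat,
      show single (((n - 1 : ℕ)) : Fin n) ((0 : ℕ) : Fin n) (1 : R)
        = Ee R n (n - 1) 0 from rfl,
      show single (((n - 1 : ℕ)) : Fin n) (((n - 1 : ℕ)) : Fin n) (1 : R)
        = Ee R n (n - 1) (n - 1) from rfl,
      mul_add, mul_one, add_mul, one_mul, smul_mul_assoc, mul_smul_comm,
      Ee_mul_ne _ _ (by omega) (by omega) (by omega), smul_zero, smul_zero, add_zero]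
    abel
  have hABC : prodDesc (fun j => Jmat n (j + 1) (c j)) (n - 2) * J0mat n z (x 0)
        * dnmat n (v * z)
      = prodDesc (fun j => Jmat n (j + 1) (c j)) (n - 2)
        + ((x 0 * z) • Ee R n (n - 1) 0 + (v * z) • Ee R n (n - 1) (n - 1)) := by
    rw [mul_assoc, hBC, mul_add, mul_one, mul_add, mul_smul_comm, mul_smul_comm,
      hArow 0, hArow (n - 1)]
  have hP : prodDesc (fun j => Jmat n (j + 1) (c j)) (n - 2) * J0mat n z (x 0)
        * dnmat n (v * z) * prodAsc (fun j => Jmat n (j + 1) (-(c j))) (n - 2)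
      = 1 + ((x 0 * z) • (∑ j ∈ Finset.range (n - 1), dd c j • Ee R n (n - 1) j)
          + (v * z) • Ee R n (n - 1) (n - 1)) := by
    rw [hABC, add_mul, hAinv, add_mul, smul_mul_assoc, smul_mul_assoc, hrow0, hrowlast]
  -- the product formula for all of `Fin n`
  have hprod : (∏ i : Fin n, x i) = x 0 * ∏ t ∈ Finset.range (n - 1), c t := by
    obtain ⟨m, rfl⟩ : ∃ m, n = m + 1 := ⟨n - 1, by omega⟩
    rw [Fin.prod_univ_succ, Nat.add_sub_cancel,
      ← Fin.prod_univ_eq_prod_range (fun t => c t) m]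
    congr 1
    refine Finset.prod_congr rfl fun i _ => ?_
    rw [hc]
    congr 1
    apply Fin.ext
    simp [Fin.val_cast_of_lt (by omega : (i : ℕ) + 1 < m + 1)]
  have hkey : (-1 : R) ^ (n - 1) * (∏ i : Fin n, x i) * z
      + c (n - 2) * (x 0 * z * dd c (n - 2)) = 0 := by
    rw [hprod, dd, show (n : ℕ) - 1 = n - 2 + 1 from by omega, Finset.prod_range_succ]
    ring
  -- multiplying by `J_{n-1}(x_{n-1})`
  have hPT : (1 + ((x 0 * z) • (∑ j ∈ Finset.range (n - 1), dd c j • Ee R n (n - 1) j)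
          + (v * z) • Ee R n (n - 1) (n - 1)))
        * (1 + c (n - 2) • Ee R n (n - 2) (n - 1))
      = 1 + ((x 0 * z) • (∑ j ∈ Finset.range (n - 1), dd c j • Ee R n (n - 1) j)
          + c (n - 2) • Ee R n (n - 2) (n - 1)) := by
    rw [mul_add, mul_one, mul_smul_comm, add_mul, one_mul, add_mul,
      smul_mul_assoc, smul_mul_assoc,
      rowsum_mul_Ee (n - 1) (dd c) (n - 1) (by omega) (by omega : n - 2 < n - 1),
      Ee_mul_ne _ _ (by omega) (by omega) (by omega)]
    match_scalars
    all_goals try ring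
    all_goals first
      | linear_combination hkey
      | linear_combination -hkey
  -- the final multiplication by `g` (as `1 + S`)
  have hWS : (∑ j ∈ Finset.range (n - 1), dd c j • Ee R n (n - 1) j)
        * (∑ j ∈ Finset.range (n - 2), c j • Ee R n j (j + 1))
      = ∑ k ∈ Finset.range (n - 2), (c k * dd c k) • Ee R n (n - 1) (k + 1) := by
    rw [Finset.mul_sum]
    refine Finset.sum_congr rfl fun k hk => ?_
    have hk' := Finset.mem_range.mp hk
    rw [mul_smul_comm, rowsum_mul_Ee (n - 1) (dd c) (k + 1) (by omega) (by omega : k < n - 1),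
      smul_smul]
  have hW1S : (∑ j ∈ Finset.range (n - 1), dd c j • Ee R n (n - 1) j)
        * (1 + ∑ j ∈ Finset.range (n - 2), c j • Ee R n j (j + 1))
      = Ee R n (n - 1) 0 := by
    rw [mul_add, mul_one, hWS]
    have h := telescope (n := n) c (n - 2)
    rwa [show (n : ℕ) - 2 + 1 = n - 1 from by omega] at h
  have hE31S : Ee R n (n - 2) (n - 1)
        * (1 + ∑ j ∈ Finset.range (n - 2), c j • Ee R n j (j + 1))
      = Ee R n (n - 2) (n - 1) := by
    rw [mul_add, mul_one, Finset.mul_sum]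
    rw [Finset.sum_eq_zero fun j hj => ?_, add_zero]
    have hj' := Finset.mem_range.mp hj
    rw [mul_smul_comm, Ee_mul_ne _ _ (by omega) (by omega) (by omega), smul_zero]
  have hXsum : (∑ i ∈ Finset.range (n - 1),
        x ((i + 1 : ℕ) : Fin n) • single ((i : ℕ) : Fin n) ((i + 1 : ℕ) : Fin n) (1 : R))
      = (∑ j ∈ Finset.range (n - 2), c j • Ee R n j (j + 1))
        + c (n - 2) • Ee R n (n - 2) (n - 1) := by
    have hterm : ∀ i : ℕ,
        x ((i + 1 : ℕ) : Fin n) • single ((i : ℕ) : Fin n) ((i + 1 : ℕ) : Fin n) (1 : R)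
          = c i • Ee R n i (i + 1) := fun i => rfl
    simp only [hterm]
    rw [show (n : ℕ) - 1 = n - 2 + 1 from by omega, Finset.sum_range_succ,
      show (n : ℕ) - 2 + 1 = n - 1 from by omega]
  -- assemble everything
  rw [hsplit, ← mul_assoc, hP, hPT, hA, Xmat, hXsum,
    add_mul, one_mul, add_mul, smul_mul_assoc, smul_mul_assoc, hW1S, hE31S,
    show single (((n - 1 : ℕ)) : Fin n) ((0 : ℕ) : Fin n) (1 : R)
      = Ee R n (n - 1) 0 from rfl]
  abel
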